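/- The logistic loss is exp-concave with constant e^{−B} on the ball of radius B with unit-norm features: for |u| ≤ B (where u = θᵀx with ‖θ‖ ≤ B, ‖x‖ ≤ 1) and y ∈ {0,1}, the function u ↦ exp(−e^{−B}·[log(1+e^u) − yu]) is concave in u on [−B, B]. -/

import Mathlib

/-- Exp-concavity of the logistic loss with constant `e^{-B}` on `[-B, B]`:
`u ↦ exp(-e^{-B}·(log(1+e^u) − y·u))` is concave on `[-B, B]`. -/
theorem logistic_loss_exp_concave (B y : ℝ) (hB : 0 < B) (hy : y = 0 ∨ y = 1) :
    ConcaveOn ℝ (Set.Icc (-B) B)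
      (fun u : ℝ => Real.exp (-(Real.exp (-B)) * (Real.log (1 + Real.exp u) - y * u))) := by
  set α := Real.exp (-B) with hαdef
  have hα : 0 < α := Real.exp_pos _
  set f : ℝ → ℝ := fun u => Real.exp (-α * (Real.log (1 + Real.exp u) - y * u)) with hfdef
  set s : ℝ → ℝ := fun u => Real.exp u / (1 + Real.exp u) with hsdef
  have hpos : ∀ u : ℝ, (0:ℝ) < 1 + Real.exp u := fun u => by positivity
  -- derivative of the loss
  have hL : ∀ u : ℝ, HasDerivAt (fun u => Real.log (1 + Real.exp u) - y * u) (s u - y) u := by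
    intro u
    have h1 : HasDerivAt (fun u : ℝ => 1 + Real.exp u) (Real.exp u) u :=
      (Real.hasDerivAt_exp u).const_add 1
    have h2 := h1.log (ne_of_gt (hpos u))
    have h3 : HasDerivAt (fun u : ℝ => y * u) y u := by
      simpa using (hasDerivAt_id u).const_mul y
    exact h2.sub h3
  -- first derivative of f
  have hF : ∀ u : ℝ, HasDerivAt f (f u * (-α * (s u - y))) u := by
    intro u
    exact ((hL u).const_mul (-α)).exp
  -- derivative of s
  have hS : ∀ u : ℝ, HasDerivAt s (Real.exp u / (1 + Real.exp u) ^ 2) u := by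
    intro u
    have h1 : HasDerivAt (fun u : ℝ => 1 + Real.exp u) (Real.exp u) u :=
      (Real.hasDerivAt_exp u).const_add 1
    have := (Real.hasDerivAt_exp u).div h1 (ne_of_gt (hpos u))
    refine this.congr_deriv ?_
    field_simp
    ring
  -- second derivative
  have hF2 : ∀ u : ℝ, HasDerivAt (fun u => f u * (-α * (s u - y)))
      (f u * (α ^ 2 * (s u - y) ^ 2 - α * (Real.exp u / (1 + Real.exp u) ^ 2))) u := by
    intro u
    have h1 : HasDerivAt (fun u : ℝ => -α * (s u - y)) (-α * (Real.exp u / (1 + Real.exp u) ^ 2)) u := by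
      simpa using (((hS u).sub_const y).const_mul (-α))
    have := (hF u).mul h1
    refine this.congr_deriv ?_
    ring
  refine concaveOn_of_hasDerivWithinAt2_nonpos (convex_Icc _ _)
    (f := f) (f' := fun u => f u * (-α * (s u - y)))
    (f'' := fun u => f u * (α ^ 2 * (s u - y) ^ 2 - α * (Real.exp u / (1 + Real.exp u) ^ 2)))
    ?_ (fun x _ => (hF x).hasDerivWithinAt) (fun x _ => (hF2 x).hasDerivWithinAt) ?_
  · exact fun x _ => ((hF x).continuousAt).continuousWithinAt
  · intro x hx
    rw [interior_Icc] at hx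
    obtain ⟨hx1, hx2⟩ := hx
    have hfpos : 0 < f x := Real.exp_pos _
    have key : α * (s x - y) ^ 2 ≤ Real.exp x / (1 + Real.exp x) ^ 2 := by
      rcases hy with rfl | rfl
      · -- y = 0 : need α * s^2 ≤ e^x/(1+e^x)^2, i.e. α * e^x ≤ 1
        have h1 : α * Real.exp x ≤ 1 := by
          rw [hαdef, ← Real.exp_add]
          exact Real.exp_le_one_iff.mpr (by linarith)
        have hd : (0:ℝ) < (1 + Real.exp x) ^ 2 := by positivity
        show α * (Real.exp x / (1 + Real.exp x) - 0) ^ 2 ≤ Real.exp x / (1 + Real.exp x) ^ 2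
        rw [sub_zero, div_pow]
        have hex : 0 < Real.exp x := Real.exp_pos x
        have h2 : α * Real.exp x ^ 2 ≤ Real.exp x := by nlinarith
        calc α * (Real.exp x ^ 2 / (1 + Real.exp x) ^ 2)
            = (α * Real.exp x ^ 2) / (1 + Real.exp x) ^ 2 := by ring
          _ ≤ Real.exp x / (1 + Real.exp x) ^ 2 := by gcongr
      · -- y = 1 : s - 1 = -1/(1+e^x); need α ≤ e^x
        have h1 : α ≤ Real.exp x := by
          rw [hαdef]
          exact Real.exp_le_exp.mpr (le_of_lt hx1)
        have hsx : s x - 1 = -(1 / (1 + Real.exp x)) := by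
          rw [hsdef]
          field_simp
          ring
        show α * (s x - 1) ^ 2 ≤ Real.exp x / (1 + Real.exp x) ^ 2
        rw [hsx]
        have hd : (0:ℝ) < (1 + Real.exp x) ^ 2 := by positivity
        rw [neg_pow, div_pow, one_pow]
        calc α * ((-1:ℝ)^2 * (1 / (1 + Real.exp x)^2)) = α / (1 + Real.exp x)^2 := by ring
          _ ≤ Real.exp x / (1 + Real.exp x)^2 := by gcongr
    have : α ^ 2 * (s x - y) ^ 2 - α * (Real.exp x / (1 + Real.exp x) ^ 2) ≤ 0 := by
      nlinarith
    exact mul_nonpos_of_nonneg_of_nonpos (le_of_lt hfpos) this
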